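/- In a flow graph G with depth-first spanning tree T and loop nesting forest H with parent function h, for every vertex u, loop(u) equals the set of all descendants of u in H. -/

import Mathlib

universe u

variable {V : Type u}

attribute [local instance] Classical.propDecidable

/-- A flow graph: a directed graph with arc relation `A` and start vertex `s`. -/
structure FlowGraph (V : Type u) where
  A : V → V → Prop
  s : V

namespace FlowGraph

/-- `p` is a (directed) path from `a` to `b`: a nonempty list of vertices starting at `a`,
ending at `b`, with consecutive vertices joined by arcs. -/
def IsPath (G : FlowGraph V) (p : List V) (a b : V) : Prop :=
  p ≠ [] ∧ p.head? = some a ∧ p.getLast? = some b ∧ p.Chain' G.A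

def Reach (G : FlowGraph V) (a b : V) : Prop := ∃ p, G.IsPath p a b

/-- `u` dominates `v`: every path from the start vertex `s` to `v` contains `u`. -/
def Dom (G : FlowGraph V) (u v : V) : Prop :=
  ∀ p, G.IsPath p G.s v → u ∈ p

/-- Acyclic: no cycle of more than one vertex, i.e. no two distinct mutually reachable
vertices. -/
def Acyclic (G : FlowGraph V) : Prop :=
  ∀ a b, a ≠ b → ¬ (G.Reach a b ∧ G.Reach b a)

/-- A spanning tree of `G` rooted at `s`, given by a parent function: every non-root
vertex has a tree arc from its parent, and the parent chain of every vertex reaches `s`. -/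
structure SpanningTree (G : FlowGraph V) where
  parent : V → V
  parent_arc : ∀ v, v ≠ G.s → G.A (parent v) v
  parent_root : parent G.s = G.s
  root_reach : ∀ v, Relation.ReflTransGen (fun a b => parent a = b) v G.s

/-- `u` is an ancestor of `v` in the tree `T` (reflexively). -/
def Anc {G : FlowGraph V} (T : SpanningTree G) (u v : V) : Prop :=
  Relation.ReflTransGen (fun a b => T.parent a = b) v u

/-- Replace occurrences of `v` by `x`. -/
noncomputable def repl (v x a : V) : V := if a = v then x else a

/-- Contraction of vertex `v` into vertex `x`: every arc end equal to `v` is replaced by `x`. -/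
noncomputable def contract (G : FlowGraph V) (v x : V) : FlowGraph V where
  A a b := ∃ a' b', G.A a' b' ∧ a = repl v x a' ∧ b = repl v x b'
  s := G.s

/-- `x ∈ loop(u)`: `x` is a descendant of `u` in `T` with a path from `x` to `u` in `G`
containing only descendants of `u` in `T`. -/
def InLoop (G : FlowGraph V) (T : SpanningTree G) (u x : V) : Prop :=
  Anc T u x ∧ ∃ p, G.IsPath p x u ∧ ∀ y ∈ p, Anc T u y

/-- `d` is an immediate-dominator function for `G`: for each `v ≠ s`, `d v ≠ v` is a
dominator of `v` and every dominator of `v` other than `v` itself dominates `d v`. -/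
def IsIdom (G : FlowGraph V) (d : V → V) : Prop :=
  ∀ v, v ≠ G.s → d v ≠ v ∧ G.Dom (d v) v ∧
    ∀ u, G.Dom u v → u ≠ v → G.Dom u (d v)

end FlowGraph

open FlowGraph

lemma isPath_single (G : FlowGraph V) (a : V) : G.IsPath [a] a a :=
  ⟨by simp, rfl, rfl, List.isChain_singleton a⟩

lemma isPath_append (G : FlowGraph V) {p q : List V} {a b c : V}
    (hp : G.IsPath p a b) (hq : G.IsPath q b c) :
    G.IsPath (p ++ q.tail) a c ∧ ∀ y ∈ p ++ q.tail, y ∈ p ∨ y ∈ q := by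
  obtain ⟨hp0, hp1, hp2, hp3⟩ := hp
  obtain ⟨hq0, hq1, hq2, hq3⟩ := hq
  obtain ⟨b', q', rfl⟩ : ∃ b' q', q = b' :: q' := List.exists_cons_of_ne_nil hq0
  have hb : b' = b := by simpa using hq1
  subst hb
  refine ⟨⟨by simp [hp0], ?_, ?_, ?_⟩, ?_⟩
  · rw [List.head?_append_of_ne_nil] <;> simpa
  · rcases q' with _ | ⟨qh, qt⟩
    · simpa using hp2.trans (by simpa using hq2)
    · rw [List.tail_cons, List.getLast?_append_of_ne_nil _ (by simp : qh :: qt ≠ [])]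
      rw [List.getLast?_cons_cons] at hq2
      exact hq2
  · change List.IsChain _ _ at hq3 ⊢
    rw [List.isChain_append]
    refine ⟨hp3, hq3.tail, ?_⟩
    intro x hx y hy
    rw [hp2] at hx
    obtain rfl : b' = x := by simpa using hx
    rw [List.isChain_cons] at hq3
    exact hq3.1 y hy
  · intro y hy
    rcases List.mem_append.1 hy with h | h
    · exact Or.inl h
    · exact Or.inr (List.mem_cons_of_mem _ h)

section
variable {G : FlowGraph V} (T : SpanningTree G)

lemma anc_trans {a b c : V} (h1 : Anc T a b) (h2 : Anc T b c) : Anc T a c :=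
  Relation.ReflTransGen.trans h2 h1

lemma anc_root {w : V} (h1 : Anc T w G.s) : w = G.s := by
  have key : ∀ x : V, Relation.ReflTransGen (fun a b => T.parent a = b) G.s x → x = G.s := by
    intro x hx
    induction hx with
    | refl => rfl
    | tail _ hstep ih => subst ih; rw [T.parent_root] at hstep; exact hstep.symm
  exact key w h1

lemma anc_parent {w x : V} (h1 : Anc T w x) (h2 : w ≠ x) : Anc T w (T.parent x) := by
  rcases Relation.ReflTransGen.cases_head h1 with rfl | ⟨c, hc, hh⟩
  · exact absurd rfl h2
  · exact hc ▸ hh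

lemma inLoop_self (G : FlowGraph V) (T : SpanningTree G) (u : V) : InLoop G T u u :=
  ⟨Relation.ReflTransGen.refl, [u], isPath_single G u, by
    intro y hy; simp at hy; subst hy; exact Relation.ReflTransGen.refl⟩

lemma inLoop_trans {G : FlowGraph V} {T : SpanningTree G} {u y x : V}
    (h1 : InLoop G T u y) (h2 : InLoop G T y x) : InLoop G T u x := by
  obtain ⟨ha1, p, hp, hpm⟩ := h1
  obtain ⟨ha2, q, hq, hqm⟩ := h2
  obtain ⟨hpath, hmem⟩ := isPath_append G hq hp
  refine ⟨anc_trans T ha1 ha2, _, hpath, ?_⟩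
  intro z hz
  rcases hmem z hz with hh | hh
  · exact anc_trans T ha1 (hqm z hh)
  · exact hpm z hh

lemma tree_path {G : FlowGraph V} (T : SpanningTree G) {w x : V} (h1 : Anc T w x) :
    ∃ p, G.IsPath p w x ∧ ∀ y ∈ p, Anc T w y := by
  unfold Anc at h1
  induction h1 using Relation.ReflTransGen.head_induction_on with
  | refl => exact ⟨[w], isPath_single G w, by
      intro y hy; simp at hy; subst hy; exact Relation.ReflTransGen.refl⟩
  | @head x' c hstep hrest ih =>
    rcases eq_or_ne x' w with rfl | hxw
    · exact ⟨_, isPath_single G _, by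
        intro y hy; simp at hy; subst hy; exact Relation.ReflTransGen.refl⟩
    · have hxs : x' ≠ G.s := by
        rintro rfl
        exact hxw (anc_root T (Relation.ReflTransGen.head hstep hrest)).symm
      obtain ⟨p, hp, hpm⟩ := ih
      have harc : G.A c x' := hstep ▸ T.parent_arc x' hxs
      have hx'path : G.IsPath [c, x'] c x' := ⟨by simp, rfl, rfl, List.isChain_pair.2 harc⟩
      obtain ⟨hpath, hmem⟩ := isPath_append G hp hx'path
      refine ⟨_, hpath, ?_⟩
      intro y hy
      rcases hmem y hy with hh | hh
      · exact hpm y hh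
      · simp only [List.mem_cons, List.not_mem_nil, or_false] at hh
        rcases hh with rfl | rfl
        · exact hrest
        · exact Relation.ReflTransGen.head hstep hrest

end

/-- If `h` is the parent function of the loop nesting forest `H` of `G` with respect to a
depth-first spanning tree `T` (with postorder numbering), then for every vertex `u`,
`loop(u)` is exactly the set of descendants of `u` in `H`. -/
theorem stmt14 [LinearOrder V] (G : FlowGraph V) (T : SpanningTree G)
    (hreach : ∀ v, G.Reach G.s v)
    (hanc : ∀ a b, Anc T a b → b ≤ a)
    (hint : ∀ u x y, Anc T u x → x ≤ y → y ≤ u → Anc T u y)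
    (hcross : ∀ x y, G.A x y → ¬ Anc T x y → ¬ Anc T y x → y < x)
    (h : V → Option V)
    (hsome : ∀ v u, h v = some u ↔
      (Anc T u v ∧ u ≠ v ∧ InLoop G T u v ∧
        ∀ u', Anc T u' v → u' ≠ v → InLoop G T u' v → Anc T u' u))
    (hnone : ∀ v, h v = none ↔ ∀ u, ¬ (Anc T u v ∧ u ≠ v ∧ InLoop G T u v)) :
    ∀ u x, InLoop G T u x ↔ Relation.ReflTransGen (fun a b => h a = some b) x u := by
  intro u x
  constructor
  · intro hx
    have key : ∀ z : V, Anc T u z → ∀ w, Anc T w z → InLoop G T u w →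
        Relation.ReflTransGen (fun a b => h a = some b) w u := by
      intro z hz
      unfold Anc at hz
      induction hz using Relation.ReflTransGen.head_induction_on with
      | refl =>
        intro w hw hlw
        have hwu : w = u := le_antisymm (hanc u w hlw.1) (hanc w u hw)
        subst hwu
        exact Relation.ReflTransGen.refl
      | @head z' c hstep hrest ih =>
        intro w hw hlw
        rcases eq_or_ne w z' with rfl | hwz
        · rcases eq_or_ne w u with rfl | hwu
          · exact Relation.ReflTransGen.refl
          · have hne : h w ≠ none := by
              intro he
              exact (hnone w).1 he u ⟨hlw.1, Ne.symm hwu, hlw⟩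
            obtain ⟨w', hw'⟩ := Option.ne_none_iff_exists'.mp hne
            obtain ⟨haw', hneq, hlw', hmax⟩ := (hsome w w').1 hw'
            have hancuw' : Anc T u w' := hmax u hlw.1 (Ne.symm hwu) hlw
            have hw'loop : InLoop G T u w' := by
              obtain ⟨p, hp, hpm⟩ := tree_path T haw'
              obtain ⟨_, q, hq, hqm⟩ := hlw
              obtain ⟨hpath, hmem⟩ := isPath_append G hp hq
              exact ⟨hancuw', _, hpath, fun y hy =>
                (hmem y hy).elim (fun hh => anc_trans T hancuw' (hpm y hh)) (hqm y)⟩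
            have hancw'c : Anc T w' c := hstep ▸ anc_parent T haw' hneq
            exact Relation.ReflTransGen.head hw' (ih w' hancw'c hw'loop)
        · have hwc : Anc T w c := hstep ▸ anc_parent T hw hwz
          exact ih w hwc hlw
    exact key x hx.1 x Relation.ReflTransGen.refl hx
  · intro hrt
    induction hrt using Relation.ReflTransGen.head_induction_on with
    | refl => exact inLoop_self G T u
    | @head a c hstep hrest ih =>
      exact inLoop_trans ih ((hsome a c).1 hstep).2.2.1
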